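/- With B = A ⊗ E the tensor product of an associative algebra A with the exterior algebra E on k generators, there is the decomposition [B,[B,[B,B]]] = [A,[A,[A,A]]] ⊗ (E^0 ⊕ E^1) + ([A,A[A,A]] + A[A,[A,A]]) ⊗ E^2 + [A,A[A,A]] ⊗ E_−^{≥3} + A[A,A] ⊗ E_+^{≥4}, where E_+^{≥4} = ⊕_{i even, i ≥ 4} E^i. -/

import Mathlib

set_option maxHeartbeats 1000000


open TensorProduct

/-- The exterior (Grassmann) algebra over ℂ on `k` generators. -/
abbrev ExtAlg (k : ℕ) := ExteriorAlgebra ℂ (Fin k → ℂ)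

/-- The degree-`i` graded component `E^i` of the exterior algebra. -/
noncomputable def Egrade (k i : ℕ) : Submodule ℂ (ExtAlg k) :=
  LinearMap.range (ExteriorAlgebra.ι ℂ : (Fin k → ℂ) →ₗ[ℂ] ExtAlg k) ^ i

/-- `E_− = ⊕_{i odd} E^i`. -/
noncomputable def Eodd (k : ℕ) : Submodule ℂ (ExtAlg k) := ⨆ i ∈ {i : ℕ | Odd i}, Egrade k i

/-- `E_+^{≥2} = ⊕_{i even, i ≥ 2} E^i`. -/
noncomputable def EevenGe2 (k : ℕ) : Submodule ℂ (ExtAlg k) :=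
  ⨆ i ∈ {i : ℕ | Even i ∧ 2 ≤ i}, Egrade k i

/-- `E_−^{≥3} = ⊕_{i odd, i ≥ 3} E^i`. -/
noncomputable def EoddGe3 (k : ℕ) : Submodule ℂ (ExtAlg k) :=
  ⨆ i ∈ {i : ℕ | Odd i ∧ 3 ≤ i}, Egrade k i

/-- `E_+^{≥4} = ⊕_{i even, i ≥ 4} E^i`. -/
noncomputable def EevenGe4 (k : ℕ) : Submodule ℂ (ExtAlg k) :=
  ⨆ i ∈ {i : ℕ | Even i ∧ 4 ≤ i}, Egrade k i

/-- `[X,Y]`: the ℂ-span of all commutators `[x,y] = xy − yx`, `x ∈ X`, `y ∈ Y`. -/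
noncomputable def commS {B : Type*} [Ring B] [Algebra ℂ B] (X Y : Submodule ℂ B) : Submodule ℂ B :=
  Submodule.span ℂ {z | ∃ x ∈ X, ∃ y ∈ Y, z = x * y - y * x}

/-- `U ⊗ F`: the ℂ-span of the pure tensors `u ⊗ f`, `u ∈ U`, `f ∈ F`, inside `A ⊗ E`. -/
noncomputable def tenS {A : Type*} [Ring A] [Algebra ℂ A] {k : ℕ}
    (U : Submodule ℂ A) (F : Submodule ℂ (ExtAlg k)) : Submodule ℂ (A ⊗[ℂ] ExtAlg k) :=
  Submodule.span ℂ {z | ∃ u ∈ U, ∃ f ∈ F, z = u ⊗ₜ[ℂ] f}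

section Stmt16Aux
open Submodule

noncomputable def cB (B : Type*) [Ring B] [Algebra ℂ B] : B →ₗ[ℂ] B →ₗ[ℂ] B :=
  LinearMap.mul ℂ B - (LinearMap.mul ℂ B).flip

noncomputable def aB (B : Type*) [Ring B] [Algebra ℂ B] : B →ₗ[ℂ] B →ₗ[ℂ] B :=
  LinearMap.mul ℂ B + (LinearMap.mul ℂ B).flip

@[simp] lemma cB_apply {B : Type*} [Ring B] [Algebra ℂ B] (x y : B) :
    cB B x y = x * y - y * x := rfl

@[simp] lemma aB_apply {B : Type*} [Ring B] [Algebra ℂ B] (x y : B) :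
    aB B x y = x * y + y * x := rfl

noncomputable def acS {B : Type*} [Ring B] [Algebra ℂ B] (X Y : Submodule ℂ B) :
    Submodule ℂ B := Submodule.map₂ (aB B) X Y

lemma commS_eq_map₂ {B : Type*} [Ring B] [Algebra ℂ B] (X Y : Submodule ℂ B) :
    commS X Y = Submodule.map₂ (cB B) X Y := by
  rw [Submodule.map₂_eq_span_image2]
  unfold commS
  congr 1
  ext z
  simp only [Set.mem_image2, Set.mem_setOf_eq, cB_apply, SetLike.mem_coe]
  constructor
  · rintro ⟨x, hx, y, hy, rfl⟩; exact ⟨x, hx, y, hy, rfl⟩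
  · rintro ⟨x, hx, y, hy, rfl⟩; exact ⟨x, hx, y, hy, rfl⟩

lemma tenS_eq_map₂ {A : Type*} [Ring A] [Algebra ℂ A] {k : ℕ}
    (U : Submodule ℂ A) (F : Submodule ℂ (ExtAlg k)) :
    tenS U F = Submodule.map₂ (TensorProduct.mk ℂ A (ExtAlg k)) U F := by
  rw [Submodule.map₂_eq_span_image2]
  unfold tenS
  congr 1
  ext z
  simp only [Set.mem_image2, Set.mem_setOf_eq, mk_apply, SetLike.mem_coe]
  constructor
  · rintro ⟨x, hx, y, hy, rfl⟩; exact ⟨x, hx, y, hy, rfl⟩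
  · rintro ⟨x, hx, y, hy, rfl⟩; exact ⟨x, hx, y, hy, rfl⟩

section EXT
lemma Egrade_mul {k : ℕ} (p q : ℕ) : Egrade k p * Egrade k q = Egrade k (p + q) :=
  (pow_add _ p q).symm

lemma iSup_Egrade {k : ℕ} : (⨆ i, Egrade k i) = ⊤ := by
  rw [eq_top_iff]
  rintro x -
  induction x using DirectSum.Decomposition.inductionOn
    (fun i : ℕ => ⋀[ℂ]^i (Fin k → ℂ)) with
  | zero => exact zero_mem _
  | homogeneous m => exact le_iSup (Egrade k) _ m.2
  | add a b ha hb => exact add_mem ha hb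

lemma iota_mul_mem {k q : ℕ} (m : Fin k → ℂ) {f : ExtAlg k}
    (hf : f ∈ Egrade k q) :
    ExteriorAlgebra.ι ℂ m * f = ((-1 : ℂ)) ^ q • (f * ExteriorAlgebra.ι ℂ m) := by
  induction q generalizing f with
  | zero =>
      rw [Egrade, pow_zero] at hf
      obtain ⟨r, rfl⟩ := Submodule.mem_one.mp hf
      simp [Algebra.commutes]
  | succ n ih =>
      rw [Egrade, pow_succ'] at hf
      refine Submodule.mul_induction_on hf (fun a ha b hb => ?_) (fun x y hx hy => ?_)
      · obtain ⟨m', rfl⟩ := ha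
        have hswap : ExteriorAlgebra.ι ℂ m * ExteriorAlgebra.ι ℂ m'
            = -(ExteriorAlgebra.ι ℂ m' * ExteriorAlgebra.ι ℂ m) :=
          eq_neg_of_add_eq_zero_left (ExteriorAlgebra.ι_add_mul_swap (R := ℂ) m m')
        have hb' : b ∈ Egrade k n := hb
        rw [← mul_assoc, hswap, neg_mul, mul_assoc, ih hb']
        rw [pow_succ, mul_smul, neg_one_smul, smul_neg, mul_smul_comm, mul_assoc]
      · rw [mul_add, hx, hy, add_mul, smul_add]

lemma Egrade_mul_comm {k p q : ℕ} {e f : ExtAlg k}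
    (he : e ∈ Egrade k p) (hf : f ∈ Egrade k q) :
    f * e = ((-1 : ℂ)) ^ (p * q) • (e * f) := by
  induction p generalizing e with
  | zero =>
      rw [Egrade, pow_zero] at he
      obtain ⟨r, rfl⟩ := Submodule.mem_one.mp he
      simp [Algebra.commutes]
  | succ n ih =>
      rw [Egrade, pow_succ'] at he
      refine Submodule.mul_induction_on he (fun a ha b hb => ?_) (fun x y hx hy => ?_)
      · obtain ⟨m', rfl⟩ := ha
        have hb' : b ∈ Egrade k n := hb
        have h2 : f * ExteriorAlgebra.ι ℂ m' = (-1 : ℂ) ^ q • (ExteriorAlgebra.ι ℂ m' * f) := by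
          rw [iota_mul_mem m' hf, smul_smul, ← pow_add, Even.neg_one_pow ⟨q, rfl⟩, one_smul]
        rw [← mul_assoc, h2, smul_mul_assoc, mul_assoc, ih hb', mul_smul_comm, smul_smul,
          ← pow_add, mul_assoc]
        congr 2
        ring
      · rw [mul_add, hx, hy, ← smul_add, ← add_mul]

end EXT
section
variable {A : Type*} [Ring A] [Algebra ℂ A] {k : ℕ}

lemma tmul_comm_key {p q : ℕ} (u v : A) {f g : ExtAlg k}
    (hf : f ∈ Egrade k p) (hg : g ∈ Egrade k q) :
    cB (A ⊗[ℂ] ExtAlg k) (u ⊗ₜ[ℂ] f) (v ⊗ₜ[ℂ] g)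
      = (u * v - (-1 : ℂ) ^ (p * q) • (v * u)) ⊗ₜ[ℂ] (f * g) := by
  simp only [cB_apply, Algebra.TensorProduct.tmul_mul_tmul]
  rw [Egrade_mul_comm hf hg, tmul_smul, smul_tmul', ← sub_tmul]

lemma comm_graded_aux {p q : ℕ} (U V : Submodule ℂ A) (c' : A →ₗ[ℂ] A →ₗ[ℂ] A)
    (hc : ∀ (u v : A) (f g : ExtAlg k), f ∈ Egrade k p → g ∈ Egrade k q →
      cB (A ⊗[ℂ] ExtAlg k) (u ⊗ₜ[ℂ] f) (v ⊗ₜ[ℂ] g) = (c' u v) ⊗ₜ[ℂ] (f * g)) :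
    commS (tenS U (Egrade k p)) (tenS V (Egrade k q))
      = tenS (Submodule.map₂ c' U V) (Egrade k (p + q)) := by
  rw [commS_eq_map₂, tenS_eq_map₂, tenS_eq_map₂, tenS_eq_map₂,
    Submodule.map₂_eq_span_image2 _ U (Egrade k p),
    Submodule.map₂_eq_span_image2 _ V (Egrade k q),
    Submodule.map₂_span_span,
    ← Egrade_mul p q, Submodule.mul_eq_map₂,
    Submodule.map₂_eq_span_image2 c' U V,
    Submodule.map₂_eq_span_image2 (LinearMap.mul ℂ (ExtAlg k)) (Egrade k p) (Egrade k q),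
    Submodule.map₂_span_span]
  congr 1
  ext z
  simp only [Set.mem_image2, SetLike.mem_coe]
  constructor
  · rintro ⟨_, ⟨u, hu, f, hf, rfl⟩, _, ⟨v, hv, g, hg, rfl⟩, rfl⟩
    exact ⟨c' u v, ⟨u, hu, v, hv, rfl⟩, f * g, ⟨f, hf, g, hg, rfl⟩, (hc u v f g hf hg).symm⟩
  · rintro ⟨_, ⟨u, hu, v, hv, rfl⟩, _, ⟨f, hf, g, hg, rfl⟩, rfl⟩
    exact ⟨u ⊗ₜ[ℂ] f, ⟨u, hu, f, hf, rfl⟩, v ⊗ₜ[ℂ] g, ⟨v, hv, g, hg, rfl⟩, hc u v f g hf hg⟩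

noncomputable def ec {A : Type*} [Ring A] [Algebra ℂ A] (U V : Submodule ℂ A) (p q : ℕ) :
    Submodule ℂ A :=
  if Odd (p * q) then acS U V else commS U V

lemma ec_odd {U V : Submodule ℂ A} {p q : ℕ} (h : Odd (p * q)) : ec U V p q = acS U V :=
  if_pos h

lemma ec_even {U V : Submodule ℂ A} {p q : ℕ} (h : Even (p * q)) : ec U V p q = commS U V :=
  if_neg (by simpa [Nat.not_odd_iff_even] using h)

lemma comm_graded {p q : ℕ} (U V : Submodule ℂ A) :
    commS (tenS U (Egrade k p)) (tenS V (Egrade k q))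
      = tenS (ec U V p q) (Egrade k (p + q)) := by
  rcases Nat.even_or_odd (p * q) with hpar | hpar
  · rw [ec_even hpar, commS_eq_map₂ U V]
    refine comm_graded_aux U V (cB A) fun u v f g hf hg => ?_
    rw [tmul_comm_key u v hf hg, Even.neg_one_pow hpar, one_smul, cB_apply]
  · rw [ec_odd hpar, acS]
    refine comm_graded_aux U V (aB A) fun u v f g hf hg => ?_
    rw [tmul_comm_key u v hf hg, Odd.neg_one_pow hpar, aB_apply, neg_one_smul, sub_neg_eq_add]
end
section GR
variable {A : Type*} [Ring A] [Algebra ℂ A] {k : ℕ}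

noncomputable def gr (k : ℕ) (c : ℕ → Submodule ℂ A) : Submodule ℂ (A ⊗[ℂ] ExtAlg k) :=
  ⨆ n, tenS (c n) (Egrade k n)

lemma tenS_mono_left {U U' : Submodule ℂ A} (h : U ≤ U') (F : Submodule ℂ (ExtAlg k)) :
    tenS U F ≤ tenS U' F := by
  rw [tenS_eq_map₂, tenS_eq_map₂]
  exact Submodule.map₂_le_map₂_left h

lemma tenS_iSup_left {ι : Sort*} (s : ι → Submodule ℂ A) (F : Submodule ℂ (ExtAlg k)) :
    tenS (⨆ i, s i) F = ⨆ i, tenS (s i) F := by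
  rw [tenS_eq_map₂, Submodule.map₂_iSup_left]
  simp_rw [tenS_eq_map₂]

lemma tenS_iSup_right {ι : Sort*} (U : Submodule ℂ A) (s : ι → Submodule ℂ (ExtAlg k)) :
    tenS U (⨆ i, s i) = ⨆ i, tenS U (s i) := by
  rw [tenS_eq_map₂, Submodule.map₂_iSup_right]
  simp_rw [tenS_eq_map₂]

lemma top_eq_gr : (⊤ : Submodule ℂ (A ⊗[ℂ] ExtAlg k)) = gr k (fun _ => ⊤) := by
  rw [gr, ← tenS_iSup_right, iSup_Egrade, tenS_eq_map₂, TensorProduct.map₂_mk_top_top_eq_top]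

lemma gr_congr {c d : ℕ → Submodule ℂ A} (h : ∀ n, c n = d n) : gr k c = gr k d := by
  rw [gr, gr]
  exact iSup_congr fun n => by rw [h n]

lemma comm_gr (c d : ℕ → Submodule ℂ A) :
    commS (gr k c) (gr k d)
      = gr k (fun n => ⨆ p, ⨆ q, ⨆ _ : p + q = n, ec (c p) (d q) p q) := by
  have h1 : commS (gr k c) (gr k d)
      = ⨆ p, ⨆ q, tenS (ec (c p) (d q) p q) (Egrade k (p + q)) := by
    rw [gr, gr, commS_eq_map₂, Submodule.map₂_iSup_left]
    refine iSup_congr fun p => ?_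
    rw [Submodule.map₂_iSup_right]
    refine iSup_congr fun q => ?_
    rw [← commS_eq_map₂]
    exact comm_graded _ _
  rw [h1, gr]
  apply le_antisymm
  · refine iSup_le fun p => iSup_le fun q => le_iSup_of_le (p + q) ?_
    refine tenS_mono_left ?_ _
    exact le_iSup_of_le p (le_iSup_of_le q (le_iSup_of_le rfl le_rfl))
  · refine iSup_le fun n => ?_
    rw [tenS_iSup_left]
    refine iSup_le fun p => ?_
    rw [tenS_iSup_left]
    refine iSup_le fun q => ?_
    rw [tenS_iSup_left]
    refine iSup_le fun hpq => ?_
    subst hpq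
    exact le_iSup_of_le p (le_iSup_of_le q le_rfl)

end GR
section LAT
variable {B : Type*} [Ring B] [Algebra ℂ B]

lemma mem_commS {X Y : Submodule ℂ B} {x y : B} (hx : x ∈ X) (hy : y ∈ Y) :
    x * y - y * x ∈ commS X Y :=
  Submodule.subset_span ⟨x, hx, y, hy, rfl⟩

lemma mem_acS {X Y : Submodule ℂ B} {x y : B} (hx : x ∈ X) (hy : y ∈ Y) :
    x * y + y * x ∈ acS X Y :=
  Submodule.apply_mem_map₂ _ hx hy

lemma commS_le {X Y Z : Submodule ℂ B} (h : ∀ x ∈ X, ∀ y ∈ Y, x * y - y * x ∈ Z) :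
    commS X Y ≤ Z := by
  rw [commS]
  refine Submodule.span_le.2 ?_
  rintro z ⟨x, hx, y, hy, rfl⟩
  exact h x hx y hy

lemma acS_le {X Y Z : Submodule ℂ B} (h : ∀ x ∈ X, ∀ y ∈ Y, x * y + y * x ∈ Z) :
    acS X Y ≤ Z :=
  Submodule.map₂_le.2 h

lemma commS_mono {X X' Y Y' : Submodule ℂ B} (h1 : X ≤ X') (h2 : Y ≤ Y') :
    commS X Y ≤ commS X' Y' :=
  commS_le fun x hx y hy => mem_commS (h1 hx) (h2 hy)

lemma acS_mono {X X' Y Y' : Submodule ℂ B} (h1 : X ≤ X') (h2 : Y ≤ Y') :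
    acS X Y ≤ acS X' Y' :=
  Submodule.map₂_le_map₂ h1 h2

lemma le_top_mul (X : Submodule ℂ B) : X ≤ ⊤ * X := by
  intro x hx
  simpa using Submodule.mul_mem_mul (Submodule.mem_top (x := (1 : B))) hx

lemma le_mul_top (X : Submodule ℂ B) : X ≤ X * ⊤ := by
  intro x hx
  simpa using Submodule.mul_mem_mul hx (Submodule.mem_top (x := (1 : B)))

lemma top_mul_top : (⊤ : Submodule ℂ B) * ⊤ = ⊤ :=
  le_antisymm le_top (le_top_mul ⊤)

lemma le_acS_top (X : Submodule ℂ B) : X ≤ acS ⊤ X := by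
  intro x hx
  have h : ((2 : ℂ)⁻¹) • ((1 : B) * x + x * 1) = x := by
    rw [one_mul, mul_one, ← two_smul ℂ x, smul_smul]
    norm_num
  exact h ▸ Submodule.smul_mem _ _ (mem_acS Submodule.mem_top hx)

lemma acS_top_top : acS (⊤ : Submodule ℂ B) ⊤ = ⊤ :=
  le_antisymm le_top (le_acS_top ⊤)

lemma top_mul_le_halving (X : Submodule ℂ B) :
    (⊤ : Submodule ℂ B) * X ≤ acS ⊤ X ⊔ commS ⊤ X := by
  refine Submodule.mul_le.2 fun a _ x hx => ?_
  have h : ((2 : ℂ)⁻¹) • ((a * x + x * a) + (a * x - x * a)) = a * x := by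
    have : (a * x + x * a) + (a * x - x * a) = (2 : ℂ) • (a * x) := by
      rw [two_smul]; abel
    rw [this, smul_smul]
    norm_num
  refine h ▸ Submodule.smul_mem _ _ (add_mem ?_ ?_)
  · exact le_sup_left (α := Submodule ℂ B) (mem_acS Submodule.mem_top hx)
  · exact le_sup_right (α := Submodule ℂ B) (mem_commS Submodule.mem_top hx)

lemma commS_le_mul (X Y : Submodule ℂ B) : commS X Y ≤ X * Y ⊔ Y * X :=
  commS_le fun x hx y hy => sub_mem
    (le_sup_left (α := Submodule ℂ B) (Submodule.mul_mem_mul hx hy))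
    (le_sup_right (α := Submodule ℂ B) (Submodule.mul_mem_mul hy hx))

lemma acS_le_mul (X Y : Submodule ℂ B) : acS X Y ≤ X * Y ⊔ Y * X :=
  acS_le fun x hx y hy => add_mem
    (le_sup_left (α := Submodule ℂ B) (Submodule.mul_mem_mul hx hy))
    (le_sup_right (α := Submodule ℂ B) (Submodule.mul_mem_mul hy hx))

lemma leibniz_mul (X Y : Submodule ℂ B) :
    commS ⊤ X * Y ≤ commS ⊤ (X * Y) ⊔ X * commS ⊤ Y := by
  refine Submodule.mul_le.2 fun w hw y hy => ?_
  rw [commS] at hw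
  induction hw using Submodule.span_induction with
  | mem w hwmem =>
      obtain ⟨b, -, x, hx, rfl⟩ := hwmem
      have key : (b * x - x * b) * y
          = (b * (x * y) - (x * y) * b) - x * (b * y - y * b) := by noncomm_ring
      rw [key]
      refine sub_mem ?_ ?_
      · exact le_sup_left (α := Submodule ℂ B)
          (mem_commS Submodule.mem_top (Submodule.mul_mem_mul hx hy))
      · exact le_sup_right (α := Submodule ℂ B)
          (Submodule.mul_mem_mul hx (mem_commS Submodule.mem_top hy))
  | zero => rw [zero_mul]; exact zero_mem _
  | add a b ha hb iha ihb => rw [add_mul]; exact add_mem iha ihb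
  | smul r a ha iha => rw [smul_mul_assoc]; exact Submodule.smul_mem _ _ iha

end LAT
section DERIVED
variable (B : Type*) [Ring B] [Algebra ℂ B]

noncomputable def Vs : Submodule ℂ B := commS ⊤ ⊤
noncomputable def Ws : Submodule ℂ B := commS ⊤ (Vs B)
noncomputable def AVs : Submodule ℂ B := ⊤ * Vs B
noncomputable def AWs : Submodule ℂ B := ⊤ * Ws B
noncomputable def T1s : Submodule ℂ B := commS ⊤ (Ws B)
noncomputable def T3s : Submodule ℂ B := commS ⊤ (AVs B)

variable {B}

lemma V_le_AV : Vs B ≤ AVs B := le_top_mul _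
lemma W_le_V : Ws B ≤ Vs B := commS_mono le_rfl le_top
lemma W_le_AW : Ws B ≤ AWs B := le_top_mul _

lemma VA_le_AV : Vs B * ⊤ ≤ AVs B := by
  refine le_trans (leibniz_mul ⊤ ⊤) (sup_le ?_ ?_)
  · rw [top_mul_top]
    exact V_le_AV
  · exact le_rfl

lemma W_le_AV : Ws B ≤ AVs B :=
  le_trans (commS_le_mul ⊤ (Vs B)) (sup_le le_rfl VA_le_AV)

lemma top_mul_AV : (⊤ : Submodule ℂ B) * AVs B = AVs B := by
  rw [AVs, ← mul_assoc, top_mul_top]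

lemma AV_mul_top : AVs B * ⊤ ≤ AVs B := by
  rw [AVs, mul_assoc]
  calc (⊤ : Submodule ℂ B) * (Vs B * ⊤) ≤ ⊤ * AVs B :=
        mul_le_mul' le_rfl VA_le_AV
    _ = AVs B := top_mul_AV

lemma T3_le_AV : T3s B ≤ AVs B :=
  le_trans (commS_le_mul ⊤ (AVs B)) (sup_le (le_of_eq top_mul_AV) AV_mul_top)

lemma VV_le : Vs B * Vs B ≤ T3s B ⊔ AWs B := by
  refine le_trans (leibniz_mul ⊤ (Vs B)) (sup_le ?_ ?_)
  · exact le_sup_left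
  · exact le_trans (mul_le_mul' le_top le_rfl) le_sup_right

lemma WA_le : Ws B * ⊤ ≤ T3s B ⊔ AWs B := by
  refine le_trans (leibniz_mul (Vs B) ⊤) (sup_le ?_ ?_)
  · exact le_sup_of_le_left (commS_mono le_rfl VA_le_AV)
  · exact le_trans (mul_le_mul' (commS_mono le_rfl le_top) le_rfl) VV_le

lemma T1_le_T3AW : T1s B ≤ T3s B ⊔ AWs B :=
  le_trans (commS_le_mul ⊤ (Ws B)) (sup_le le_sup_right WA_le)

lemma acW_le_T3AW : acS ⊤ (Ws B) ≤ T3s B ⊔ AWs B :=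
  le_trans (acS_le_mul ⊤ (Ws B)) (sup_le le_sup_right WA_le)

lemma AW_le_acWT1 : AWs B ≤ acS ⊤ (Ws B) ⊔ T1s B := top_mul_le_halving _

lemma T1_le_T3 : T1s B ≤ T3s B := commS_mono le_rfl W_le_AV

lemma AW_le_AV : AWs B ≤ AVs B := by
  calc AWs B ≤ ⊤ * AVs B := mul_le_mul' le_rfl W_le_AV
    _ = AVs B := top_mul_AV

lemma acV_le_AV : acS ⊤ (Vs B) ≤ AVs B :=
  le_trans (acS_le_mul ⊤ (Vs B)) (sup_le le_rfl VA_le_AV)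

lemma acW_le_AV : acS ⊤ (Ws B) ≤ AVs B :=
  le_trans acW_le_T3AW (sup_le T3_le_AV AW_le_AV)

lemma T1_le_AV : T1s B ≤ AVs B := le_trans T1_le_T3 T3_le_AV

lemma AV_le_acVW : AVs B ≤ acS ⊤ (Vs B) ⊔ Ws B := top_mul_le_halving _

lemma W_le_acW : Ws B ≤ acS ⊤ (Ws B) := le_acS_top _

end DERIVED
section STEPS
variable {B : Type*} [Ring B] [Algebra ℂ B]

lemma S_le {α : Type*} [CompleteLattice α] {F : ℕ → ℕ → α} {n : ℕ} {Z : α}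
    (h : ∀ p q, p + q = n → F p q ≤ Z) :
    (⨆ p, ⨆ q, ⨆ _ : p + q = n, F p q) ≤ Z :=
  iSup_le fun p => iSup_le fun q => iSup_le fun hpq => h p q hpq

lemma le_S {α : Type*} [CompleteLattice α] (F : ℕ → ℕ → α) {n p q : ℕ} (h : p + q = n) :
    F p q ≤ ⨆ p, ⨆ q, ⨆ _ : p + q = n, F p q :=
  le_iSup_of_le p (le_iSup_of_le q (le_iSup_of_le h le_rfl))

variable (B)
noncomputable def c2f (n : ℕ) : Submodule ℂ B := if Even n ∧ 2 ≤ n then ⊤ else Vs B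
noncomputable def c3f (n : ℕ) : Submodule ℂ B :=
  if n ≤ 1 then Ws B else if Even n then AVs B else Vs B
noncomputable def c4f (n : ℕ) : Submodule ℂ B :=
  if n ≤ 1 then T1s B else if n = 2 then T3s B ⊔ AWs B else if Even n then AVs B else T3s B
variable {B}

lemma c2f_even {n : ℕ} (h : Even n) (h2 : 2 ≤ n) : c2f B n = ⊤ := by
  unfold c2f; rw [if_pos ⟨h, h2⟩]

lemma c2f_odd {n : ℕ} (h : Odd n) : c2f B n = Vs B := by
  unfold c2f
  rw [Nat.odd_iff] at h
  rw [if_neg]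
  rintro ⟨he, -⟩
  rw [Nat.even_iff] at he
  omega

lemma c2f_le1 {n : ℕ} (h : n ≤ 1) : c2f B n = Vs B := by
  unfold c2f
  rw [if_neg]
  rintro ⟨-, h2⟩
  omega

lemma c3f_le1 {n : ℕ} (h : n ≤ 1) : c3f B n = Ws B := by
  unfold c3f; rw [if_pos h]

lemma c3f_even {n : ℕ} (h : Even n) (h2 : 2 ≤ n) : c3f B n = AVs B := by
  unfold c3f; rw [if_neg (by omega), if_pos h]

lemma c3f_odd3 {n : ℕ} (h : Odd n) (h3 : 3 ≤ n) : c3f B n = Vs B := by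
  unfold c3f
  rw [Nat.odd_iff] at h
  rw [if_neg (by omega), if_neg (by rw [Nat.even_iff]; omega)]

lemma c4f_le1 {n : ℕ} (h : n ≤ 1) : c4f B n = T1s B := by
  unfold c4f; rw [if_pos h]

lemma c4f_two : c4f B 2 = T3s B ⊔ AWs B := by
  unfold c4f; norm_num

lemma c4f_even4 {n : ℕ} (h : Even n) (h4 : 4 ≤ n) : c4f B n = AVs B := by
  unfold c4f; rw [if_neg (by omega), if_neg (by omega), if_pos h]

lemma c4f_odd3 {n : ℕ} (h : Odd n) (h3 : 3 ≤ n) : c4f B n = T3s B := by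
  unfold c4f
  rw [Nat.odd_iff] at h
  rw [if_neg (by omega), if_neg (by omega), if_neg (by rw [Nat.even_iff]; omega)]

lemma V_le_c2f (n : ℕ) : Vs B ≤ c2f B n := by
  unfold c2f; split
  · exact le_top
  · exact le_rfl

lemma W_le_c3f (n : ℕ) : Ws B ≤ c3f B n := by
  unfold c3f; split_ifs
  · exact le_rfl
  · exact W_le_AV
  · exact W_le_V

lemma V_le_c3f {n : ℕ} (h2 : 2 ≤ n) : Vs B ≤ c3f B n := by
  unfold c3f; split_ifs with h1 h2'
  · omega
  · exact V_le_AV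
  · exact le_rfl

lemma T1_le_c4f (n : ℕ) : T1s B ≤ c4f B n := by
  unfold c4f; split_ifs
  · exact le_rfl
  · exact le_trans T1_le_T3AW le_rfl
  · exact T1_le_AV
  · exact T1_le_T3

lemma T3_le_c4f {n : ℕ} (h2 : 2 ≤ n) : T3s B ≤ c4f B n := by
  unfold c4f; split_ifs
  · omega
  · exact le_sup_left
  · exact T3_le_AV
  · exact le_rfl

lemma W_le_c4f {n : ℕ} (h3 : 3 ≤ n) : Ws B ≤ c4f B n := by
  unfold c4f; split_ifs
  · omega
  · omega
  · exact W_le_AV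
  · exact commS_mono le_rfl V_le_AV

lemma acW_le_c4f {n : ℕ} (h : Even n) (h2 : 2 ≤ n) : acS ⊤ (Ws B) ≤ c4f B n := by
  unfold c4f; split_ifs with h1 h2'
  · omega
  · exact acW_le_T3AW
  · exact acW_le_AV

lemma step2 (n : ℕ) :
    (⨆ p, ⨆ q, ⨆ _ : p + q = n, ec (⊤ : Submodule ℂ B) ⊤ p q) = c2f B n := by
  refine le_antisymm (S_le fun p q hpq => ?_) ?_
  · rcases Nat.even_or_odd (p * q) with he | ho
    · rw [ec_even he]
      exact V_le_c2f n
    · obtain ⟨hp, hq⟩ := Nat.odd_mul.mp ho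
      rw [Nat.odd_iff] at hp hq
      rw [ec_odd ho, c2f_even (by rw [Nat.even_iff]; omega) (by omega)]
      exact le_top
  · by_cases hc : Even n ∧ 2 ≤ n
    · rw [c2f_even hc.1 hc.2]
      have he := hc.1
      rw [Nat.even_iff] at he
      have hodd : Odd (1 * (n - 1)) := by rw [one_mul, Nat.odd_iff]; omega
      refine le_trans ?_ (le_S (fun p q => ec (⊤ : Submodule ℂ B) ⊤ p q) (by omega : 1 + (n-1) = n))
      show (⊤ : Submodule ℂ B) ≤ ec ⊤ ⊤ 1 (n - 1)
      rw [ec_odd hodd, acS_top_top]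
    · have : c2f B n = Vs B := by unfold c2f; rw [if_neg hc]
      rw [this]
      refine le_trans ?_ (le_S (fun p q => ec (⊤ : Submodule ℂ B) ⊤ p q) (zero_add n))
      show Vs B ≤ ec ⊤ ⊤ 0 n
      rw [ec_even (by rw [zero_mul]; exact Even.zero)]
      exact le_rfl


lemma step3 (n : ℕ) :
    (⨆ p, ⨆ q, ⨆ _ : p + q = n, ec (⊤ : Submodule ℂ B) (c2f B q) p q) = c3f B n := by
  refine le_antisymm (S_le fun p q hpq => ?_) ?_
  · rcases Nat.even_or_odd (p * q) with he | ho
    · rw [ec_even he]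
      by_cases hq2 : Even q ∧ 2 ≤ q
      · rw [c2f_even hq2.1 hq2.2]
        refine le_trans (commS_mono le_rfl le_top) ?_
        show Vs B ≤ c3f B n
        exact V_le_c3f (by omega)
      · have : c2f B q = Vs B := by unfold c2f; rw [if_neg hq2]
        rw [this]
        exact W_le_c3f n
    · obtain ⟨hp, hq⟩ := Nat.odd_mul.mp ho
      rw [ec_odd ho, c2f_odd hq]
      have hp' := hp; have hq' := hq
      rw [Nat.odd_iff] at hp' hq'
      rw [c3f_even (by rw [Nat.even_iff]; omega) (by omega)]
      exact acV_le_AV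
  · by_cases h1 : n ≤ 1
    · rw [c3f_le1 h1]
      refine le_trans ?_ (le_S (fun p q => ec (⊤ : Submodule ℂ B) (c2f B q) p q) (zero_add n))
      show Ws B ≤ ec ⊤ (c2f B n) 0 n
      rw [ec_even (by rw [zero_mul]; exact Even.zero), c2f_le1 h1]
      exact le_rfl
    · by_cases h2 : Even n
      · rw [c3f_even h2 (by omega)]
        refine le_trans AV_le_acVW (sup_le ?_ ?_)
        · refine le_trans ?_ (le_S (fun p q => ec (⊤ : Submodule ℂ B) (c2f B q) p q)
            (by omega : 1 + (n - 1) = n))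
          show acS ⊤ (Vs B) ≤ ec ⊤ (c2f B (n - 1)) 1 (n - 1)
          have he := h2; rw [Nat.even_iff] at he
          have hodd : Odd (n - 1) := by rw [Nat.odd_iff]; omega
          rw [ec_odd (by rw [one_mul]; exact hodd), c2f_odd hodd]
        · refine le_trans ?_ (le_S (fun p q => ec (⊤ : Submodule ℂ B) (c2f B q) p q)
            (by omega : n + 0 = n))
          show Ws B ≤ ec ⊤ (c2f B 0) n 0
          rw [ec_even (by rw [mul_zero]; exact Even.zero), c2f_le1 (by omega)]
          exact le_rfl
      · rw [c3f_odd3 (Nat.odd_iff.2 (by rw [Nat.even_iff] at h2; omega)) (by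
          rw [Nat.even_iff] at h2; omega)]
        refine le_trans ?_ (le_S (fun p q => ec (⊤ : Submodule ℂ B) (c2f B q) p q)
          (by omega : (n - 2) + 2 = n))
        show Vs B ≤ ec ⊤ (c2f B 2) (n - 2) 2
        rw [ec_even ⟨n - 2, by ring⟩, c2f_even even_two le_rfl]
        exact commS_mono le_rfl le_top

lemma step4 (n : ℕ) :
    (⨆ p, ⨆ q, ⨆ _ : p + q = n, ec (⊤ : Submodule ℂ B) (c3f B q) p q) = c4f B n := by
  refine le_antisymm (S_le fun p q hpq => ?_) ?_
  · rcases Nat.even_or_odd (p * q) with he | ho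
    · rw [ec_even he]
      by_cases hq1 : q ≤ 1
      · rw [c3f_le1 hq1]
        exact T1_le_c4f n
      · by_cases hq2 : Even q
        · rw [c3f_even hq2 (by omega)]
          exact T3_le_c4f (by omega)
        · rw [c3f_odd3 (Nat.odd_iff.2 (by rw [Nat.even_iff] at hq2; omega))
            (by rw [Nat.even_iff] at hq2; omega)]
          exact W_le_c4f (by rw [Nat.even_iff] at hq2; omega)
    · obtain ⟨hp, hq⟩ := Nat.odd_mul.mp ho
      have hp' := hp; have hq' := hq
      rw [Nat.odd_iff] at hp' hq'
      rw [ec_odd ho]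
      by_cases hq1 : q ≤ 1
      · rw [c3f_le1 hq1]
        exact acW_le_c4f (by rw [Nat.even_iff]; omega) (by omega)
      · rw [c3f_odd3 hq (by omega)]
        rw [c4f_even4 (by rw [Nat.even_iff]; omega) (by omega)]
        exact acV_le_AV
  · by_cases h1 : n ≤ 1
    · rw [c4f_le1 h1]
      refine le_trans ?_ (le_S (fun p q => ec (⊤ : Submodule ℂ B) (c3f B q) p q) (zero_add n))
      show T1s B ≤ ec ⊤ (c3f B n) 0 n
      rw [ec_even (by rw [zero_mul]; exact Even.zero), c3f_le1 h1]
      exact le_rfl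
    · by_cases h2 : n = 2
      · subst h2
        rw [c4f_two]
        refine sup_le ?_ (le_trans AW_le_acWT1 (sup_le ?_ ?_))
        · refine le_trans ?_ (le_S (fun p q => ec (⊤ : Submodule ℂ B) (c3f B q) p q)
            (zero_add 2))
          show T3s B ≤ ec ⊤ (c3f B 2) 0 2
          rw [ec_even (by rw [zero_mul]; exact Even.zero), c3f_even even_two le_rfl]
          exact le_rfl
        · refine le_trans ?_ (le_S (fun p q => ec (⊤ : Submodule ℂ B) (c3f B q) p q)
            (by norm_num : 1 + 1 = 2))
          show acS ⊤ (Ws B) ≤ ec ⊤ (c3f B 1) 1 1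
          rw [ec_odd (by norm_num), c3f_le1 le_rfl]
        · refine le_trans ?_ (le_S (fun p q => ec (⊤ : Submodule ℂ B) (c3f B q) p q)
            (by norm_num : 2 + 0 = 2))
          show T1s B ≤ ec ⊤ (c3f B 0) 2 0
          rw [ec_even (by rw [mul_zero]; exact Even.zero), c3f_le1 (by norm_num)]
          exact le_rfl
      · by_cases h3 : Even n
        · have he := h3; rw [Nat.even_iff] at he
          rw [c4f_even4 h3 (by omega)]
          refine le_trans AV_le_acVW (sup_le ?_ ?_)
          · refine le_trans ?_ (le_S (fun p q => ec (⊤ : Submodule ℂ B) (c3f B q) p q)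
              (by omega : (n - 3) + 3 = n))
            show acS ⊤ (Vs B) ≤ ec ⊤ (c3f B 3) (n - 3) 3
            rw [ec_odd (Nat.odd_mul.2 ⟨Nat.odd_iff.2 (by omega), ⟨1, by norm_num⟩⟩),
              c3f_odd3 ⟨1, by norm_num⟩ le_rfl]
          · refine le_trans W_le_acW ?_
            refine le_trans ?_ (le_S (fun p q => ec (⊤ : Submodule ℂ B) (c3f B q) p q)
              (by omega : (n - 1) + 1 = n))
            show acS ⊤ (Ws B) ≤ ec ⊤ (c3f B 1) (n - 1) 1
            rw [ec_odd (Nat.odd_mul.2 ⟨Nat.odd_iff.2 (by omega), ⟨0, by norm_num⟩⟩), c3f_le1 le_rfl]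
        · have ho := h3; rw [Nat.even_iff] at ho
          rw [c4f_odd3 (Nat.odd_iff.2 (by omega)) (by omega)]
          refine le_trans ?_ (le_S (fun p q => ec (⊤ : Submodule ℂ B) (c3f B q) p q)
            (by omega : (n - 2) + 2 = n))
          show T3s B ≤ ec ⊤ (c3f B 2) (n - 2) 2
          rw [ec_even ⟨n - 2, by ring⟩, c3f_even even_two le_rfl]
          exact le_rfl

end STEPS
section FINAL
variable {A : Type*} [Ring A] [Algebra ℂ A] {k : ℕ}

lemma tenS_mono_right (U : Submodule ℂ A) {F F' : Submodule ℂ (ExtAlg k)} (h : F ≤ F') :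
    tenS U F ≤ tenS U F' := by
  rw [tenS_eq_map₂, tenS_eq_map₂]
  exact Submodule.map₂_le_map₂_right h

lemma tenS_sup_right (U : Submodule ℂ A) (F F' : Submodule ℂ (ExtAlg k)) :
    tenS U (F ⊔ F') = tenS U F ⊔ tenS U F' := by
  rw [tenS_eq_map₂, Submodule.map₂_sup_right, tenS_eq_map₂, tenS_eq_map₂]


end FINAL

/-- with `B = A ⊗ E`,
`[B,[B,[B,B]]] = [A,[A,[A,A]]] ⊗ (E^0 ⊕ E^1) + ([A,A[A,A]] + A[A,[A,A]]) ⊗ E^2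
  + [A,A[A,A]] ⊗ E_−^{≥3} + A[A,A] ⊗ E_+^{≥4}`. -/
theorem stmt_16 (A : Type*) [Ring A] [Algebra ℂ A] (k : ℕ) :
    commS (⊤ : Submodule ℂ (A ⊗[ℂ] ExtAlg k)) (commS ⊤ (commS ⊤ ⊤)) =
      tenS (commS (⊤ : Submodule ℂ A) (commS ⊤ (commS ⊤ ⊤))) (Egrade k 0 ⊔ Egrade k 1)
      + tenS (commS (⊤ : Submodule ℂ A) ((⊤ : Submodule ℂ A) * commS ⊤ ⊤)
            + (⊤ : Submodule ℂ A) * commS (⊤ : Submodule ℂ A) (commS ⊤ ⊤)) (Egrade k 2)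
      + tenS (commS (⊤ : Submodule ℂ A) ((⊤ : Submodule ℂ A) * commS ⊤ ⊤)) (EoddGe3 k)
      + tenS ((⊤ : Submodule ℂ A) * commS (⊤ : Submodule ℂ A) ⊤) (EevenGe4 k) := by
  have e1 : commS (⊤ : Submodule ℂ (A ⊗[ℂ] ExtAlg k)) ⊤ = gr k (c2f A) := by
    rw [top_eq_gr, comm_gr]
    exact gr_congr step2
  have e2 : commS (⊤ : Submodule ℂ (A ⊗[ℂ] ExtAlg k)) (commS ⊤ ⊤) = gr k (c3f A) := by
    rw [e1, top_eq_gr, comm_gr]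
    exact gr_congr step3
  have e3 : commS (⊤ : Submodule ℂ (A ⊗[ℂ] ExtAlg k)) (commS ⊤ (commS ⊤ ⊤)) = gr k (c4f A) := by
    rw [e2, top_eq_gr, comm_gr]
    exact gr_congr step4
  rw [e3]
  have hT1 : commS (⊤ : Submodule ℂ A) (commS ⊤ (commS ⊤ ⊤)) = T1s A := rfl
  have hT3 : commS (⊤ : Submodule ℂ A) ((⊤ : Submodule ℂ A) * commS ⊤ ⊤) = T3s A := rfl
  have hAW : (⊤ : Submodule ℂ A) * commS (⊤ : Submodule ℂ A) (commS ⊤ ⊤) = AWs A := rfl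
  have hAV : (⊤ : Submodule ℂ A) * commS (⊤ : Submodule ℂ A) ⊤ = AVs A := rfl
  rw [hT1, hT3, hAW, hAV]
  simp only [Submodule.add_eq_sup]
  rw [EoddGe3, EevenGe4]
  simp only [Set.mem_setOf_eq]
  rw [gr]
  apply le_antisymm
  · refine iSup_le fun n => ?_
    by_cases h1 : n ≤ 1
    · rw [c4f_le1 h1]
      refine le_sup_of_le_left (le_sup_of_le_left (le_sup_of_le_left (tenS_mono_right _ ?_)))
      interval_cases n
      · exact le_sup_left
      · exact le_sup_right
    · by_cases h2 : n = 2
      · subst h2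
        rw [c4f_two]
        exact le_sup_of_le_left (le_sup_of_le_left le_sup_right)
      · by_cases h3 : Even n
        · rw [c4f_even4 h3 (by rw [Nat.even_iff] at h3; omega)]
          refine le_sup_of_le_right (tenS_mono_right _ ?_)
          exact le_iSup_of_le n (le_iSup_of_le ⟨h3, by rw [Nat.even_iff] at h3; omega⟩ le_rfl)
        · have ho : Odd n := Nat.odd_iff.2 (by rw [Nat.even_iff] at h3; omega)
          rw [c4f_odd3 ho (by rw [Nat.even_iff] at h3; omega)]
          refine le_sup_of_le_left (le_sup_of_le_right (tenS_mono_right _ ?_))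
          exact le_iSup_of_le n (le_iSup_of_le ⟨ho, by rw [Nat.even_iff] at h3; omega⟩ le_rfl)
  · refine sup_le (sup_le (sup_le ?_ ?_) ?_) ?_
    · rw [tenS_sup_right]
      refine sup_le ?_ ?_
      · refine le_iSup_of_le 0 ?_
        rw [c4f_le1 (by norm_num)]
      · refine le_iSup_of_le 1 ?_
        rw [c4f_le1 le_rfl]
    · refine le_iSup_of_le 2 ?_
      rw [c4f_two]
    · rw [tenS_iSup_right]
      refine iSup_le fun i => ?_
      rw [tenS_iSup_right]
      refine iSup_le fun hi => ?_
      refine le_iSup_of_le i ?_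
      rw [c4f_odd3 hi.1 hi.2]
    · rw [tenS_iSup_right]
      refine iSup_le fun i => ?_
      rw [tenS_iSup_right]
      refine iSup_le fun hi => ?_
      refine le_iSup_of_le i ?_
      rw [c4f_even4 hi.1 hi.2]
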